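/- arXiv:1206.6201 — 3 statements merged into one kernel-verified Lean document; each statement's English description precedes it below -/
import Mathlib

section
/- For every graph G = (V,E) with at least one edge, the graph C(G) obtained from the gadget construction is a caterpillar whose maximum degree is at most 3. -/
/-- Vertices of the caterpillar `C(G)` built from a graph with `m` enumerated edges:
backbone positions `0, …, 5m` (gadget `i` occupies positions `5i, …, 5i+5`, consecutive
gadgets sharing an endpoint), together with two hairs per gadget
(`(i, false) = h₃ⁱ` and `(i, true) = h₄ⁱ`). -/
abbrev CatV (m : ℕ) := Fin (5 * m + 1) ⊕ (Fin m × Bool)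

/-- Base adjacency relation of the caterpillar: consecutive backbone vertices are adjacent,
hair `h₃ⁱ` is adjacent (only) to position `5i+2` (`= b₃ⁱ`), and hair `h₄ⁱ` is adjacent
(only) to position `5i+3` (`= b₄ⁱ`). -/
def catRel (m : ℕ) : CatV m → CatV m → Prop
  | .inl p, .inl q => (q : ℕ) = (p : ℕ) + 1
  | .inr (i, h), .inl p => (p : ℕ) = 5 * (i : ℕ) + (if h then 3 else 2)
  | _, _ => False

/-- The caterpillar `C(G)` (as a graph). -/
def catGraph (m : ℕ) : SimpleGraph (CatV m) := SimpleGraph.fromRel (catRel m)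

/-- A graph is a path graph if its vertices can be enumerated as `v_0, …, v_{n-1}` with
two vertices adjacent iff they are consecutive in the enumeration. -/
def IsPathGraph {α : Type*} (G : SimpleGraph α) : Prop :=
  ∃ (n : ℕ) (e : Fin n ≃ α),
    ∀ i j : Fin n, G.Adj (e i) (e j) ↔ ((i : ℕ) + 1 = (j : ℕ) ∨ (j : ℕ) + 1 = (i : ℕ))

/-- A connected graph is a caterpillar if its vertex set can be partitioned into a set `B`
inducing a path and a set of remaining vertices each of which has exactly one neighbor,
which lies in `B`. -/
def IsCaterpillar {α : Type*} (G : SimpleGraph α) : Prop :=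
  G.Connected ∧ ∃ B : Set α, IsPathGraph (G.induce B) ∧
    ∀ v : α, v ∉ B → ∃ u ∈ B, G.Adj v u ∧ ∀ w : α, G.Adj v w → w = u

open Sum

lemma catGraph_adj {m : ℕ} {x y : CatV m} :
    (catGraph m).Adj x y ↔ x ≠ y ∧ (catRel m x y ∨ catRel m y x) :=
  SimpleGraph.fromRel_adj _ _ _

lemma adj_inl_inl {m : ℕ} {p q : Fin (5*m+1)} :
    (catGraph m).Adj (inl p) (inl q) ↔ ((q:ℕ) = (p:ℕ) + 1 ∨ (p:ℕ) = (q:ℕ) + 1) := by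
  rw [catGraph_adj]
  simp only [catRel]
  constructor
  · rintro ⟨-, h⟩; exact h
  · intro h
    refine ⟨?_, h⟩
    intro he
    injection he with he'
    subst he'
    omega

lemma adj_inr_inl {m : ℕ} {i : Fin m} {h : Bool} {p : Fin (5*m+1)} :
    (catGraph m).Adj (inr (i,h)) (inl p) ↔ (p:ℕ) = 5*(i:ℕ) + (if h then 3 else 2) := by
  rw [catGraph_adj]
  simp only [catRel]
  constructor
  · rintro ⟨-, hh | hh⟩
    · exact hh
    · exact hh.elim
  · intro hh; exact ⟨by simp, Or.inl hh⟩

lemma not_adj_inr_inr {m : ℕ} {a b : Fin m × Bool} :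
    ¬ (catGraph m).Adj (inr a) (inr b) := by
  obtain ⟨i, h⟩ := a
  obtain ⟨j, h'⟩ := b
  rw [catGraph_adj]
  rintro ⟨-, hh | hh⟩ <;> exact hh

lemma reach_zero {m : ℕ} : ∀ k, (hk : k ≤ 5*m) →
    (catGraph m).Reachable (inl ⟨0, by omega⟩) (inl ⟨k, by omega⟩) := by
  intro k
  induction k with
  | zero => intro _; exact SimpleGraph.Reachable.refl _
  | succ n ih =>
    intro hk
    refine (ih (by omega)).trans (SimpleGraph.Adj.reachable ?_)
    rw [adj_inl_inl]
    left
    simp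

lemma hair_le {m : ℕ} (i : Fin m) (h : Bool) :
    5*(i:ℕ) + (if h then 3 else 2) ≤ 5*m := by
  have := i.isLt; split <;> omega

lemma catMain (m : ℕ) :
    IsCaterpillar (catGraph m) ∧ ∀ x : CatV m, ((catGraph m).neighborSet x).ncard ≤ 3 := by
  have key : ∀ z : CatV m, (catGraph m).Reachable (inl ⟨0, by omega⟩) z := by
    intro z
    match z with
    | inl p =>
      have h := reach_zero (m := m) p.val (by omega)
      simpa using h
    | inr (i, h) =>
      exact (reach_zero _ (hair_le i h)).trans
        (SimpleGraph.Adj.reachable (adj_inr_inl.mpr rfl).symm).symm.symm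
  refine ⟨⟨?_, ?_⟩, ?_⟩
  · -- Connected
    rw [SimpleGraph.connected_iff]
    exact ⟨fun x y => (key x).symm.trans (key y), ⟨inl ⟨0, by omega⟩⟩⟩
  · -- caterpillar structure
    refine ⟨Set.range (inl : Fin (5*m+1) → CatV m),
      ⟨5*m+1, Equiv.ofInjective _ inl_injective, ?_⟩, ?_⟩
    · intro i j
      show (catGraph m).Adj _ _ ↔ _
      simp only [Equiv.ofInjective_apply, Function.Embedding.coe_subtype]
      rw [adj_inl_inl]
      omega
    · intro v hv
      match v with
      | inl p => exact absurd ⟨p, rfl⟩ hv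
      | inr (i, h) =>
        refine ⟨inl ⟨5*(i:ℕ) + (if h then 3 else 2), by have := hair_le i h; omega⟩,
          ⟨_, rfl⟩, adj_inr_inl.mpr rfl, ?_⟩
        intro w hw
        match w with
        | inl q =>
          have hq := adj_inr_inl.mp hw
          exact congrArg inl (Fin.ext (by simpa using hq))
        | inr b => exact absurd hw not_adj_inr_inr
  · -- degrees
    intro x
    match x with
    | inr (i, h) =>
      have hsub : (catGraph m).neighborSet (inr (i,h)) ⊆
          {inl ⟨5*(i:ℕ) + (if h then 3 else 2), by have := hair_le i h; omega⟩} := by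
        intro y hy
        rw [SimpleGraph.mem_neighborSet] at hy
        match y with
        | inl q =>
          have hq := adj_inr_inl.mp hy
          exact congrArg inl (Fin.ext (by simpa using hq))
        | inr b => exact absurd hy not_adj_inr_inr
      calc ((catGraph m).neighborSet (inr (i,h))).ncard
          ≤ _ := Set.ncard_le_ncard hsub (Set.finite_singleton _)
        _ ≤ 3 := by rw [Set.ncard_singleton]; omega
    | inl p =>
      set c1 : CatV m := inl ⟨(p:ℕ) - 1, by omega⟩ with hc1
      set c2 : CatV m := inl ⟨min ((p:ℕ)+1) (5*m), by omega⟩ with hc2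
      set T : Set (CatV m) :=
        {y | y ∈ (catGraph m).neighborSet (inl p) ∧ ∃ a, y = inr a} with hTdef
      have hT : T.Subsingleton := by
        rintro y ⟨hy1, ⟨⟨i, h⟩, rfl⟩⟩ z ⟨hz1, ⟨⟨j, h'⟩, rfl⟩⟩
        rw [SimpleGraph.mem_neighborSet] at hy1 hz1
        have e1 := adj_inr_inl.mp hy1.symm
        have e2 := adj_inr_inl.mp hz1.symm
        have : i = j ∧ h = h' := by
          cases h <;> cases h' <;> simp only [Bool.false_eq_true, if_true, if_false] at e1 e2 <;>
            first
              | exact ⟨Fin.ext (by omega), rfl⟩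
              | (exfalso; omega)
        rw [this.1, this.2]
      have hsub : (catGraph m).neighborSet (inl p) ⊆ insert c1 (insert c2 T) := by
        intro y hy
        have hy' := hy
        rw [SimpleGraph.mem_neighborSet] at hy'
        match y with
        | inl q =>
          rcases adj_inl_inl.mp hy' with hq | hq
          · right; left
            have : (p:ℕ) + 1 ≤ 5*m := by have := q.isLt; omega
            exact congrArg inl (Fin.ext (by simp; omega))
          · left
            exact congrArg inl (Fin.ext (by simp; omega))
        | inr a => exact Or.inr (Or.inr ⟨hy, a, rfl⟩)
      have hTfin : T.Finite := hT.finite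
      have hfin : (insert c1 (insert c2 T)).Finite := (hTfin.insert _).insert _
      have hTcard : T.ncard ≤ 1 := by
        rcases hT.eq_empty_or_singleton with h | ⟨a, h⟩ <;> simp [h]
      calc ((catGraph m).neighborSet (inl p)).ncard
          ≤ (insert c1 (insert c2 T)).ncard := Set.ncard_le_ncard hsub hfin
        _ ≤ (insert c2 T).ncard + 1 := Set.ncard_insert_le _ _
        _ ≤ T.ncard + 1 + 1 := by have := Set.ncard_insert_le c2 T; omega
        _ ≤ 3 := by omega

/-- For every graph `G` with at least one edge (its `m` edges being
enumerated by `ε`), the graph `C(G)` of the gadget construction is a caterpillar whose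
maximum degree is at most `3`. -/
theorem catGraph_isCaterpillar_maxDegree_le_three
    {V : Type*} [Fintype V] [DecidableEq V]
    (G : SimpleGraph V) (m : ℕ) (ε : ℕ → V × V)
    (hadj : ∀ i < m, G.Adj (ε i).1 (ε i).2)
    (hsurj : ∀ u v : V, G.Adj u v → ∃ i < m, s((ε i).1, (ε i).2) = s(u, v))
    (hinj : ∀ i < m, ∀ j < m, s((ε i).1, (ε i).2) = s((ε j).1, (ε j).2) → i = j)
    (hedge : ∃ u v : V, G.Adj u v) :
    IsCaterpillar (catGraph m) ∧
      ∀ x : CatV m, ((catGraph m).neighborSet x).ncard ≤ 3 := by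
  exact catMain m
end

section
/- Let G be a connected precolored graph and c a color such that the set V_c of vertices of color c is nonempty, the subgraph of G induced by V_c is connected, and every vertex of G either has color c or has a neighbor of color c. Let S be the set of colors different from c that appear on some vertex of G. Then the free flooding game on G has a solution of length |S|. -/
open scoped Classical

/-- The set of vertices colored (and merged) by a coloring operation at `v`:
`v` together with all vertices in the same connected component as `v` in the
subgraph induced by the vertices of color `col v`. -/
def floodRegion {V C : Type*} (G : SimpleGraph V) (col : V → C) (v : V) : Set V :=
  {u | ∃ p : G.Walk v u, ∀ w ∈ p.support, col w = col v}

/-- The coloring operation `(v, c)`. -/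
noncomputable def floodStep {V C : Type*} (G : SimpleGraph V) (col : V → C)
    (v : V) (c : C) : V → C :=
  fun u => if u ∈ floodRegion G col v then c else col u

/-- Applying a sequence of coloring operations. -/
noncomputable def floodSeq {V C : Type*} (G : SimpleGraph V) (col : V → C) :
    List (V × C) → V → C
  | [] => col
  | op :: ops => floodSeq G (floodStep G col op.1 op.2) ops

/-- A sequence of coloring operations is a solution of the free flooding game if
applying it makes all vertices of `G` have the same color. -/
def IsFloodSolution {V C : Type*} (G : SimpleGraph V) (col : V → C)
    (ops : List (V × C)) : Prop :=
  ∃ c : C, ∀ u : V, floodSeq G col ops u = c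

section Aux

variable {V C : Type*} (G : SimpleGraph V) (col : V → C) (c : C)

lemma exists_mono_walk (hconn : (G.induce {v : V | col v = c}).Connected)
    {x y : V} (hx : col x = c) (hy : col y = c) :
    ∃ p : G.Walk x y, ∀ w ∈ p.support, col w = c := by
  obtain ⟨q⟩ := hconn ⟨x, hx⟩ ⟨y, hy⟩
  refine ⟨q.map (SimpleGraph.Embedding.induce _).toHom, ?_⟩
  intro w hw
  replace hw : w ∈ (q.map (SimpleGraph.Embedding.induce {v : V | col v = c}).toHom).support := hw
  rw [SimpleGraph.Walk.support_map, List.mem_map] at hw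
  obtain ⟨⟨w', hw'⟩, -, rfl⟩ := hw
  exact hw'

lemma region_eq (hconn : (G.induce {v : V | col v = c}).Connected)
    (hdom : ∀ v : V, col v = c ∨ ∃ u : V, G.Adj v u ∧ col u = c)
    {v₀ : V} (hv₀ : col v₀ = c) (T : Set C) (d : C) (hc : c ∈ T) (hd : d ∈ T) :
    floodRegion G (fun u => if col u ∈ T then d else col u) v₀ = {u | col u ∈ T} := by
  have hcolv₀ : (if col v₀ ∈ T then d else col v₀) = d := by
    rw [if_pos (hv₀ ▸ hc)]
  ext u
  simp only [floodRegion, Set.mem_setOf_eq]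
  constructor
  · rintro ⟨p, hp⟩
    have := hp u p.end_mem_support
    rw [hcolv₀] at this
    by_cases h : col u ∈ T
    · exact h
    · rw [if_neg h] at this; exact this ▸ hd
  · intro hu
    rcases hdom u with h | ⟨w, hadj, hw⟩
    · obtain ⟨p, hp⟩ := exists_mono_walk G col c hconn hv₀ h
      refine ⟨p, fun w hw => ?_⟩
      rw [hcolv₀, if_pos (hp w hw ▸ hc)]
    · obtain ⟨p, hp⟩ := exists_mono_walk G col c hconn hv₀ hw
      refine ⟨p.concat hadj.symm, fun x hx => ?_⟩
      rw [SimpleGraph.Walk.support_concat, List.mem_append] at hx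
      rw [hcolv₀]
      rcases hx with hx | hx
      · rw [if_pos (hp x hx ▸ hc)]
      · simp only [List.mem_singleton] at hx
        subst hx
        rw [if_pos hu]

lemma flood_aux [Fintype V] (hconn : (G.induce {v : V | col v = c}).Connected)
    (hdom : ∀ v : V, col v = c ∨ ∃ u : V, G.Adj v u ∧ col u = c)
    {v₀ : V} (hv₀ : col v₀ = c) :
    ∀ (L : List C) (T : Set C) (d : C), c ∈ T → d ∈ T →
      (∀ u : V, col u ∈ T ∨ col u ∈ L) →
      ∃ e : C, ∀ u : V,
        floodSeq G (fun u => if col u ∈ T then d else col u)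
          (L.map fun c' => (v₀, c')) u = e
  | [], T, d, hc, hd, hall => by
      refine ⟨d, fun u => ?_⟩
      simp only [List.map_nil, floodSeq]
      rw [if_pos ((hall u).resolve_right (by simp))]
  | c' :: L', T, d, hc, hd, hall => by
      have hstep : floodStep G (fun u => if col u ∈ T then d else col u) v₀ c'
          = fun u => @ite _ (col u ∈ insert c' T) (Classical.propDecidable _)
              c' (col u) := by
        funext u
        rw [floodStep, region_eq G col c hconn hdom hv₀ T d hc hd]
        by_cases h : col u ∈ T <;> by_cases h' : col u = c' <;>
          · simp [Set.mem_insert_iff, h, h']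
            try tauto
      have := flood_aux hconn hdom hv₀ L' (insert c' T) c'
        (Set.mem_insert_of_mem _ hc) (Set.mem_insert _ _)
        (fun u => by
          rcases hall u with h | h
          · exact Or.inl (Set.mem_insert_of_mem _ h)
          · rcases List.mem_cons.mp h with h | h
            · exact Or.inl (h ▸ Set.mem_insert _ _)
            · exact Or.inr h)
      obtain ⟨e, he⟩ := this
      refine ⟨e, fun u => ?_⟩
      simpa only [List.map_cons, floodSeq, hstep] using he u

end Aux

/-- If `G` is a connected precolored graph and `c` a color such that the
set of vertices of color `c` is nonempty, induces a connected subgraph, and dominates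
`G` (every vertex has color `c` or a neighbor of color `c`), then the free flooding
game on `G` has a solution whose length is the number of colors different from `c`
that appear on some vertex of `G`. -/


theorem flood_solution_of_connected_dominating_color
    {V C : Type*} [Fintype V] (G : SimpleGraph V) (hG : G.Connected)
    (col : V → C) (c : C)
    (hne : {v : V | col v = c}.Nonempty)
    (hconn : (G.induce {v : V | col v = c}).Connected)
    (hdom : ∀ v : V, col v = c ∨ ∃ u : V, G.Adj v u ∧ col u = c) :
    ∃ ops : List (V × C),
      ops.length = {c' : C | c' ≠ c ∧ ∃ v : V, col v = c'}.ncard ∧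
      IsFloodSolution G col ops := by
  obtain ⟨v₀, hv₀⟩ := hne
  set S := {c' : C | c' ≠ c ∧ ∃ v : V, col v = c'} with hS
  have hfin : S.Finite := (Set.finite_range col).subset (by
    rintro c' ⟨-, v, hv⟩; exact ⟨v, hv⟩)
  set L := hfin.toFinset.toList with hL
  refine ⟨L.map fun c' => (v₀, c'), ?_, ?_⟩
  · rw [List.length_map, hL, Finset.length_toList, ← Set.ncard_eq_toFinset_card _ hfin]
  · have hcol : col = fun u => if col u ∈ ({c} : Set C) then c else col u := by
      funext u
      by_cases h : col u = c <;> simp [h]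
    obtain ⟨e, he⟩ := flood_aux G col c hconn hdom hv₀ L {c} c rfl rfl
      (fun u => by
        by_cases h : col u = c
        · exact Or.inl h
        · exact Or.inr (by rw [hL, Finset.mem_toList, hfin.mem_toFinset]; exact ⟨h, u, rfl⟩))
    exact ⟨e, fun u => by rw [hcol]; exact he u⟩
end

section
/- Let G be a connected precolored split graph whose vertex set is partitioned into a nonempty clique K and an independent set I, precolored with at most k colors. Then the free flooding game on G has a solution of length at most 2k in which every coloring operation recolors a vertex of K: it first makes all vertices of K have the same color and then changes the color of the clique to absorb the vertices of I. -/
open scoped Classical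

section Helpers
variable {V C : Type*} (G : SimpleGraph V) (col : V → C)

lemma mem_region_self (v : V) : v ∈ floodRegion G col v :=
  ⟨SimpleGraph.Walk.nil, by simp⟩

lemma color_eq_of_mem_region {v u : V} (h : u ∈ floodRegion G col v) : col u = col v := by
  obtain ⟨p, hp⟩ := h
  exact hp u p.end_mem_support

lemma floodStep_apply_mem {v u : V} {c : C} (h : u ∈ floodRegion G col v) :
    floodStep G col v c u = c := if_pos h

lemma floodStep_apply_not_mem {v u : V} {c : C} (h : u ∉ floodRegion G col v) :
    floodStep G col v c u = col u := if_neg h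

lemma mem_region_of_mem_support {v u w : V} (p : G.Walk v u)
    (hp : ∀ x ∈ p.support, col x = col v) (hw : w ∈ p.support) :
    w ∈ floodRegion G col v :=
  ⟨p.takeUntil w hw, fun x hx => hp x (p.support_takeUntil_subset hw hx)⟩

lemma region_mono (v : V) (c : C) :
    floodRegion G col v ⊆ floodRegion G (floodStep G col v c) v := by
  rintro u ⟨p, hp⟩
  refine ⟨p, fun w hw => ?_⟩
  have hw' : w ∈ floodRegion G col v := mem_region_of_mem_support G col p hp hw
  rw [floodStep_apply_mem G col hw', floodStep_apply_mem G col (mem_region_self G col v)]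

lemma mem_region_of_adj {v u w : V} (hw : w ∈ floodRegion G col v)
    (hadj : G.Adj w u) (hu : col u = col v) : u ∈ floodRegion G col v := by
  obtain ⟨p, hp⟩ := hw
  refine ⟨p.concat hadj, fun x hx => ?_⟩
  rw [SimpleGraph.Walk.support_concat] at hx
  rcases (by simpa using hx : x ∈ p.support ∨ x = u) with h | h
  · exact hp x h
  · subst h; exact hu

end Helpers

section Phase
variable {V C : Type*} (G : SimpleGraph V)

lemma floodSeq_append (col : V → C) (l₁ l₂ : List (V × C)) :
    floodSeq G col (l₁ ++ l₂) = floodSeq G (floodSeq G col l₁) l₂ := by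
  induction l₁ generalizing col with
  | nil => rfl
  | cons op l ih => rw [List.cons_append]; exact ih _

lemma flood_phase (v₀ : V) (cs : List C) (hcs : cs ≠ []) (col : V → C) :
    (floodRegion G col v₀ ⊆
        floodRegion G (floodSeq G col (cs.map (fun c => (v₀, c)))) v₀) ∧
    (floodSeq G col (cs.map (fun c => (v₀, c))) v₀ = cs.getLast hcs) ∧
    (∀ u, col u ∈ cs → (∃ w ∈ floodRegion G col v₀, G.Adj w u) →
        u ∈ floodRegion G (floodSeq G col (cs.map (fun c => (v₀, c)))) v₀) ∧
    (∀ u, floodSeq G col (cs.map (fun c => (v₀, c))) u = col u ∨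
        u ∈ floodRegion G (floodSeq G col (cs.map (fun c => (v₀, c)))) v₀) := by
  induction cs generalizing col with
  | nil => exact absurd rfl hcs
  | cons c cs' ih =>
    set col₁ := floodStep G col v₀ c with hcol₁
    have hmap : (c :: cs').map (fun c => (v₀, c)) =
        (v₀, c) :: cs'.map (fun c => (v₀, c)) := rfl
    have hseq : floodSeq G col ((c :: cs').map (fun c => (v₀, c))) =
        floodSeq G col₁ (cs'.map (fun c => (v₀, c))) := rfl
    rcases eq_or_ne cs' [] with h' | h'
    · subst h'
      have hseq2 : floodSeq G col ([c].map (fun c => (v₀, c))) = col₁ := rfl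
      rw [hseq2]
      refine ⟨region_mono G col v₀ c, ?_, ?_, ?_⟩
      · simpa using floodStep_apply_mem G col (c := c) (mem_region_self G col v₀)
      · intro u hu ⟨w, hw, hadj⟩
        rcases Classical.em (u ∈ floodRegion G col v₀) with hmem | hmem
        · exact region_mono G col v₀ c hmem
        · refine mem_region_of_adj G col₁ (region_mono G col v₀ c hw) hadj ?_
          have h1 : col₁ u = col u := floodStep_apply_not_mem G col hmem
          have h2 : col₁ v₀ = c := floodStep_apply_mem G col (mem_region_self G col v₀)
          simp only [List.mem_singleton] at hu
          rw [h1, h2, hu]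
      · intro u
        rcases Classical.em (u ∈ floodRegion G col v₀) with hmem | hmem
        · exact Or.inr (region_mono G col v₀ c hmem)
        · exact Or.inl (floodStep_apply_not_mem G col hmem)
    · obtain ⟨IH1, IH2, IH3, IH4⟩ := ih h' col₁
      have hmono : floodRegion G col v₀ ⊆
          floodRegion G (floodSeq G col₁ (cs'.map (fun c => (v₀, c)))) v₀ :=
        fun u hu => IH1 (region_mono G col v₀ c hu)
      rw [hseq]
      refine ⟨hmono, ?_, ?_, ?_⟩
      · rw [IH2, List.getLast_cons h']
      · intro u hu ⟨w, hw, hadj⟩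
        rcases Classical.em (u ∈ floodRegion G col v₀) with hmem | hmem
        · exact hmono hmem
        · have h1 : col₁ u = col u := floodStep_apply_not_mem G col hmem
          rcases List.mem_cons.mp hu with hc | hc
          · -- col u = c : absorbed right after the first step
            have h2 : col₁ v₀ = c := floodStep_apply_mem G col (mem_region_self G col v₀)
            have : u ∈ floodRegion G col₁ v₀ := by
              refine mem_region_of_adj G col₁ (region_mono G col v₀ c hw) hadj ?_
              rw [h1, h2, hc]
            exact IH1 this
          · exact IH3 u (h1 ▸ hc) ⟨w, region_mono G col v₀ c hw, hadj⟩
      · intro u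
        rcases Classical.em (u ∈ floodRegion G col v₀) with hmem | hmem
        · exact Or.inr (hmono hmem)
        · rcases IH4 u with h | h
          · exact Or.inl (h.trans (floodStep_apply_not_mem G col hmem))
          · exact Or.inr h

end Phase

theorem splitGraph_flood_solution_le_two_k'
    {V C : Type*} [Fintype V] (G : SimpleGraph V) (hG : G.Connected)
    (col : V → C) (K I : Set V)
    (hunion : K ∪ I = Set.univ) (hdisj : Disjoint K I)
    (hKne : K.Nonempty)
    (hclique : G.IsClique K)
    (hindep : ∀ u ∈ I, ∀ w ∈ I, ¬ G.Adj u w)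
    (k : ℕ) (hk : (Set.range col).ncard ≤ k) :
    ∃ ops₁ ops₂ : List (V × C),
      (ops₁ ++ ops₂).length ≤ 2 * k ∧
      (∀ op ∈ ops₁ ++ ops₂, op.1 ∈ K) ∧
      (∃ c : C, ∀ v ∈ K, floodSeq G col ops₁ v = c) ∧
      ∃ c : C, ∀ u : V, floodSeq G col (ops₁ ++ ops₂) u = c := by
  obtain ⟨v₀, hv₀⟩ := hKne
  have hfin : (Set.range col).Finite := Set.finite_range col
  set cs : List C := hfin.toFinset.toList with hcs_def
  have hmemcs : ∀ u : V, col u ∈ cs := by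
    intro u
    rw [hcs_def, Finset.mem_toList, Set.Finite.mem_toFinset]
    exact Set.mem_range_self u
  have hne : cs ≠ [] := by
    intro h
    have := hmemcs v₀
    rw [h] at this
    exact List.not_mem_nil this
  have hlen : cs.length ≤ k := by
    rw [hcs_def, Finset.length_toList]
    rwa [Set.ncard_eq_toFinset_card _ hfin] at hk
  set ops : List (V × C) := cs.map (fun c => (v₀, c)) with hops_def
  set cm : C := cs.getLast hne with hcm_def
  -- Phase 1
  obtain ⟨H1mono, H1val, H1abs, H1chg⟩ := flood_phase G v₀ cs hne col
  set col₁ : V → C := floodSeq G col ops with hcol₁_def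
  -- All of K is in the region after phase 1
  have hKreg : K ⊆ floodRegion G col₁ v₀ := by
    intro u hu
    rcases eq_or_ne u v₀ with rfl | hne'
    · exact H1mono (mem_region_self G col u)
    · exact H1abs u (hmemcs u) ⟨v₀, mem_region_self G col v₀, hclique hv₀ hu (Ne.symm hne')⟩
  have hcol₁v₀ : col₁ v₀ = cm := H1val
  have hKmono : ∀ v ∈ K, col₁ v = cm := fun v hv =>
    (color_eq_of_mem_region G col₁ (hKreg hv)).trans hcol₁v₀
  -- Phase 2
  obtain ⟨H2mono, H2val, H2abs, H2chg⟩ := flood_phase G v₀ cs hne col₁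
  set col₂ : V → C := floodSeq G col₁ ops with hcol₂_def
  have hall : ∀ u : V, u ∈ floodRegion G col₂ v₀ := by
    intro u
    by_cases huK : u ∈ K
    · exact H2mono (hKreg huK)
    · have huI : u ∈ I := by
        have h : u ∈ K ∪ I := hunion ▸ Set.mem_univ u
        exact h.resolve_left huK
      have hune : u ≠ v₀ := fun h => huK (h ▸ hv₀)
      obtain ⟨p⟩ := hG.preconnected u v₀
      obtain ⟨w, hadj⟩ : ∃ w, G.Adj u w := by
        cases p with
        | nil => exact absurd rfl hune
        | cons h q => exact ⟨_, h⟩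
      have hwK : w ∈ K := by
        have h : w ∈ K ∪ I := hunion ▸ Set.mem_univ w
        rcases h with h | h
        · exact h
        · exact absurd hadj (hindep u huI w h)
      rcases Classical.em (u ∈ floodRegion G col₁ v₀) with hmem | hmem
      · exact H2mono hmem
      · refine H2abs u ?_ ⟨w, hKreg hwK, hadj.symm⟩
        rcases H1chg u with h | h
        · rw [h]; exact hmemcs u
        · exact absurd h hmem
  refine ⟨ops, ops, ?_, ?_, ⟨cm, hKmono⟩, cm, ?_⟩
  · have : ops.length = cs.length := by simp [hops_def]
    rw [List.length_append, this, two_mul]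
    exact Nat.add_le_add hlen hlen
  · intro op hop
    rcases List.mem_append.mp hop with h | h <;>
    · rw [hops_def] at h
      obtain ⟨c, -, rfl⟩ := List.mem_map.mp h
      exact hv₀
  · intro u
    rw [floodSeq_append]
    exact (color_eq_of_mem_region G col₂ (hall u)).trans H2val

/-- Let `G` be a connected precolored split graph whose vertex set is
partitioned into a nonempty clique `K` and an independent set `I`, precolored with at
most `k` colors. Then the free flooding game on `G` has a solution of length at most
`2k` in which every coloring operation recolors a vertex of `K`: it first makes all
vertices of `K` have the same color, and then changes the color of the clique to
absorb the vertices of `I`. -/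
theorem splitGraph_flood_solution_le_two_k
    {V C : Type*} [Fintype V] (G : SimpleGraph V) (hG : G.Connected)
    (col : V → C) (K I : Set V)
    (hunion : K ∪ I = Set.univ) (hdisj : Disjoint K I)
    (hKne : K.Nonempty)
    (hclique : G.IsClique K)
    (hindep : ∀ u ∈ I, ∀ w ∈ I, ¬ G.Adj u w)
    (k : ℕ) (hk : (Set.range col).ncard ≤ k) :
    ∃ ops₁ ops₂ : List (V × C),
      (ops₁ ++ ops₂).length ≤ 2 * k ∧
      (∀ op ∈ ops₁ ++ ops₂, op.1 ∈ K) ∧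
      (∃ c : C, ∀ v ∈ K, floodSeq G col ops₁ v = c) ∧
      IsFloodSolution G col (ops₁ ++ ops₂) := by
  obtain ⟨ops₁, ops₂, h1, h2, h3, h4⟩ :=
    splitGraph_flood_solution_le_two_k' G hG col K I hunion hdisj hKne hclique hindep k hk
  exact ⟨ops₁, ops₂, h1, h2, h3, h4⟩
end
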